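/- Let f : [a,b] → ℝ be of bounded variation, g : [a,b] → ℝ bounded, and P = (α,ξ) any tagged partition of [a,b]. Then |S(f,dg,P)| ≤ (|f(a)| + |f(b)| + var_a^b f) · ‖g‖_∞, where S(f,dg,P) = Σ_j f(ξ_j)(g(α_j) − g(α_{j−1})). -/

import Mathlib

open Set Filter

/-- A tagged partition of `[a,b]`: points `a = pts 0 < pts 1 < … < pts n = b`
with tags `tag j ∈ [pts j, pts (j+1)]`. -/
structure TaggedPartition (a b : ℝ) where
  n : ℕ
  pts : ℕ → ℝ
  tag : ℕ → ℝ
  n_pos : 0 < n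
  pts_zero : pts 0 = a
  pts_last : pts n = b
  pts_mono : ∀ j < n, pts j < pts (j + 1)
  tag_mem : ∀ j < n, tag j ∈ Set.Icc (pts j) (pts (j + 1))

/-- Riemann–Stieltjes sum `S(f, dg, P)`. -/
def RS (f g : ℝ → ℝ) {a b : ℝ} (P : TaggedPartition a b) : ℝ :=
  ∑ j ∈ Finset.range P.n, f (P.tag j) * (g (P.pts (j + 1)) - g (P.pts j))

/-- `P` is `δ`-fine. -/
def IsFine (δ : ℝ → ℝ) {a b : ℝ} (P : TaggedPartition a b) : Prop :=
  ∀ j < P.n, Set.Icc (P.pts j) (P.pts (j + 1)) ⊆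
    Set.Icc (P.tag j - δ (P.tag j)) (P.tag j + δ (P.tag j))

/-- The Kurzweil–Stieltjes integral `(K)∫_a^b f dg` exists and equals `I`. -/
def HasKS (f g : ℝ → ℝ) (a b I : ℝ) : Prop :=
  ∀ ε > 0, ∃ δ : ℝ → ℝ, (∀ t ∈ Set.Icc a b, 0 < δ t ∧ δ t < 1) ∧
    ∀ P : TaggedPartition a b, IsFine δ P → |RS f g P - I| < ε

/-- The division of `P` contains all points of the finite set `D`. -/
def Refines {a b : ℝ} (P : TaggedPartition a b) (D : Finset ℝ) : Prop :=
  ∀ x ∈ D, ∃ j ≤ P.n, P.pts j = x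

/-- All tags of `P` lie strictly inside the corresponding subintervals. -/
def InteriorTags {a b : ℝ} (P : TaggedPartition a b) : Prop :=
  ∀ j < P.n, P.pts j < P.tag j ∧ P.tag j < P.pts (j + 1)

/-- The Dushnik integral `(D)∫_a^b f dg` exists and equals `I`. -/
def HasDushnik (f g : ℝ → ℝ) (a b I : ℝ) : Prop :=
  ∀ ε > 0, ∃ D : Finset ℝ, ↑D ⊆ Set.Icc a b ∧
    ∀ P : TaggedPartition a b, Refines P D → InteriorTags P → |RS f g P - I| < ε

/-- `f` is regulated on `[a,b]`: it has finite one-sided limits (within `[a,b]`)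
at every point where they make sense. -/
def Regulated (f : ℝ → ℝ) (a b : ℝ) : Prop :=
  (∀ t ∈ Set.Ioc a b, ∃ L : ℝ, Filter.Tendsto f (nhdsWithin t (Set.Ico a t)) (nhds L)) ∧
  (∀ t ∈ Set.Ico a b, ∃ L : ℝ, Filter.Tendsto f (nhdsWithin t (Set.Ioc t b)) (nhds L))

/-- The Young sum `S_Y(f, dg, P)`, where `gl t = g(t-)` and `gr t = g(t+)`
are the one-sided limit functions of `g`. -/
def YS (f gl gr g : ℝ → ℝ) {a b : ℝ} (P : TaggedPartition a b) : ℝ :=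
  ∑ j ∈ Finset.range P.n,
    (f (P.pts j) * (gr (P.pts j) - g (P.pts j))
      + f (P.tag j) * (gl (P.pts (j + 1)) - gr (P.pts j))
      + f (P.pts (j + 1)) * (g (P.pts (j + 1)) - gl (P.pts (j + 1))))

/-- The Young integral `(Y)∫_a^b f dg` exists and equals `I` (here `gl`, `gr`
are the one-sided limit functions of `g`). -/
def HasYoung (f gl gr g : ℝ → ℝ) (a b I : ℝ) : Prop :=
  ∀ ε > 0, ∃ D : Finset ℝ, ↑D ⊆ Set.Icc a b ∧
    ∀ P : TaggedPartition a b, Refines P D → InteriorTags P → |YS f gl gr g P - I| < ε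

/-- `f` is a finite step function on `[a,b]`: constant on the open subintervals
of some division `a = σ 0 < … < σ m = b`. -/
def IsStepFunction (f : ℝ → ℝ) (a b : ℝ) : Prop :=
  ∃ (m : ℕ) (σ : ℕ → ℝ), 0 < m ∧ σ 0 = a ∧ σ m = b ∧ (∀ k < m, σ k < σ (k + 1)) ∧
    ∀ k < m, ∀ x ∈ Set.Ioo (σ k) (σ (k + 1)), ∀ y ∈ Set.Ioo (σ k) (σ (k + 1)), f x = f y

/-- The (real-valued) total variation of `g` on `[a,b]`. -/
noncomputable def var (g : ℝ → ℝ) (a b : ℝ) : ℝ :=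
  (eVariationOn g (Set.Icc a b)).toReal


/-- Abel summation identity. -/
lemma abel_sum (F G : ℕ → ℝ) (m : ℕ) :
    ∑ j ∈ Finset.range (m + 1), F j * (G (j + 1) - G j)
      = F m * G (m + 1) - F 0 * G 0
        - ∑ j ∈ Finset.range m, (F (j + 1) - F j) * G (j + 1) := by
  induction m with
  | zero => simp; ring
  | succ k ih =>
    rw [Finset.sum_range_succ, ih, Finset.sum_range_succ]
    ring

lemma pts_le {a b : ℝ} (P : TaggedPartition a b) :
    ∀ j, j ≤ P.n → ∀ i, i ≤ j → P.pts i ≤ P.pts j := by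
  intro j
  induction j with
  | zero => intro _ i hi; rw [Nat.le_zero.mp hi]
  | succ k ih =>
    intro hk i hi
    rcases Nat.eq_or_lt_of_le hi with rfl | h
    · exact le_rfl
    · exact le_trans (ih (by omega) i (by omega)) (le_of_lt (P.pts_mono k (by omega)))

/-- `|S(f,dg,P)| ≤ (|f(a)| + |f(b)| + var_a^b f) · ‖g‖_∞`. -/
theorem stmt7 (a b : ℝ) (hab : a < b) (f g : ℝ → ℝ) (M : ℝ)
    (hf : BoundedVariationOn f (Set.Icc a b))
    (hM : ∀ t ∈ Set.Icc a b, |g t| ≤ M)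
    (P : TaggedPartition a b) :
    |RS f g P| ≤ (|f a| + |f b| + var f a b) * M := by
  obtain ⟨m, hm⟩ : ∃ m, P.n = m + 1 := ⟨P.n - 1, by have := P.n_pos; omega⟩
  have hMnonneg : 0 ≤ M := le_trans (abs_nonneg _) (hM a ⟨le_refl a, le_of_lt hab⟩)
  -- basic facts
  have hpts : ∀ j ≤ P.n, P.pts j ∈ Set.Icc a b := by
    intro j hj
    constructor
    · have h := pts_le P j hj 0 (Nat.zero_le _); rwa [P.pts_zero] at h
    · have h := pts_le P P.n le_rfl j hj; rwa [P.pts_last] at h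
  have htag : ∀ j < P.n, P.tag j ∈ Set.Icc a b := by
    intro j hj
    obtain ⟨h1, h2⟩ := P.tag_mem j hj
    exact ⟨le_trans (hpts j (le_of_lt hj)).1 h1, le_trans h2 (hpts (j+1) hj).2⟩
  set F : ℕ → ℝ := fun j => f (P.tag j) with hF
  set G : ℕ → ℝ := fun j => g (P.pts j) with hG
  have hRS : RS f g P = F m * G (m + 1) - F 0 * G 0
      - ∑ j ∈ Finset.range m, (F (j + 1) - F j) * G (j + 1) := by
    rw [RS, hm]; exact abel_sum F G m
  have hGb : ∀ j ≤ P.n, |G j| ≤ M := fun j hj => hM _ (hpts j hj)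
  -- bound |RS|
  have step1 : |RS f g P| ≤ (|F m| + |F 0| + ∑ j ∈ Finset.range m, |F (j + 1) - F j|) * M := by
    rw [hRS]
    have h1 : |F m * G (m + 1) - F 0 * G 0
        - ∑ j ∈ Finset.range m, (F (j + 1) - F j) * G (j + 1)|
        ≤ |F m * G (m + 1)| + |F 0 * G 0|
          + |∑ j ∈ Finset.range m, (F (j + 1) - F j) * G (j + 1)| := by
      calc _ ≤ |F m * G (m + 1) - F 0 * G 0|
            + |∑ j ∈ Finset.range m, (F (j + 1) - F j) * G (j + 1)| := abs_sub _ _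
        _ ≤ _ := by
            have := abs_sub (F m * G (m + 1)) (F 0 * G 0)
            linarith
    have h2 : |∑ j ∈ Finset.range m, (F (j + 1) - F j) * G (j + 1)|
        ≤ ∑ j ∈ Finset.range m, |F (j + 1) - F j| * M := by
      refine le_trans (Finset.abs_sum_le_sum_abs _ _) (Finset.sum_le_sum ?_)
      intro j hj
      rw [abs_mul]
      exact mul_le_mul_of_nonneg_left
        (hGb (j + 1) (by simp at hj; omega)) (abs_nonneg _)
    have h3 : |F m * G (m + 1)| ≤ |F m| * M := by
      rw [abs_mul]
      exact mul_le_mul_of_nonneg_left (hGb (m + 1) (by omega)) (abs_nonneg _)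
    have h4 : |F 0 * G 0| ≤ |F 0| * M := by
      rw [abs_mul]
      exact mul_le_mul_of_nonneg_left (hGb 0 (by omega)) (abs_nonneg _)
    rw [add_mul, add_mul, Finset.sum_mul]
    linarith
  -- variation bound via the monotone chain a ≤ tag 0 ≤ ... ≤ tag m ≤ b
  set u : ℕ → ℝ := fun i => if i = 0 then a else if i ≤ m + 1 then P.tag (i - 1) else b with hu
  have hu0 : u 0 = a := by simp [hu]
  have hulast : ∀ i, m + 1 < i → u i = b := by
    intro i hi; simp only [hu]; rw [if_neg (by omega), if_neg (by omega)]
  have hutag : ∀ i, 1 ≤ i → i ≤ m + 1 → u i = P.tag (i - 1) := by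
    intro i h1 h2; simp only [hu]; rw [if_neg (by omega), if_pos h2]
  have humono : Monotone u := by
    apply monotone_nat_of_le_succ
    intro i
    rcases Nat.eq_zero_or_pos i with rfl | hipos
    · rw [hu0, hutag 1 le_rfl (by omega)]
      exact (htag 0 (by omega)).1
    rcases le_or_gt (i + 1) (m + 1) with h | h
    · rw [hutag i hipos (by omega), hutag (i + 1) (by omega) h]
      have hi1 : i - 1 + 1 = i := by omega
      have t1 : P.tag (i - 1) ≤ P.pts i := by
        have := (P.tag_mem (i - 1) (by omega)).2; rwa [hi1] at this
      have t2 : P.pts i ≤ P.tag i := (P.tag_mem i (by omega)).1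
      exact le_trans t1 t2
    rcases Nat.eq_or_lt_of_le h with h' | h'
    · rw [hutag i hipos (by omega), hulast (i + 1) (by omega)]
      have : i - 1 = m := by omega
      rw [this]
      have := (P.tag_mem m (by omega)).2
      calc P.tag m ≤ P.pts (m + 1) := this
        _ = b := by rw [← hm, P.pts_last]
    · rw [hulast i (by omega), hulast (i + 1) (by omega)]
  have humem : ∀ i, u i ∈ Set.Icc a b := by
    intro i
    rcases Nat.eq_zero_or_pos i with rfl | hipos
    · rw [hu0]; exact ⟨le_rfl, le_of_lt hab⟩
    rcases le_or_gt i (m + 1) with h | h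
    · rw [hutag i hipos h]; exact htag (i - 1) (by omega)
    · rw [hulast i h]; exact ⟨le_of_lt hab, le_rfl⟩
  have hvar : ∑ i ∈ Finset.range (m + 2), |f (u (i + 1)) - f (u i)| ≤ var f a b := by
    have h := eVariationOn.sum_le (f := f) (n := m + 2) humono humem
    calc ∑ i ∈ Finset.range (m + 2), |f (u (i + 1)) - f (u i)|
        = (∑ i ∈ Finset.range (m + 2), edist (f (u (i + 1))) (f (u i))).toReal := by
          rw [ENNReal.toReal_sum (fun i _ => edist_ne_top _ _)]
          refine Finset.sum_congr rfl fun i _ => ?_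
          rw [edist_dist, ENNReal.toReal_ofReal dist_nonneg, Real.dist_eq, abs_sub_comm]
      _ ≤ var f a b := ENNReal.toReal_mono hf h
  -- decompose the variation sum
  have hdecomp : ∑ i ∈ Finset.range (m + 2), |f (u (i + 1)) - f (u i)|
      = |F 0 - f a| + (∑ j ∈ Finset.range m, |F (j + 1) - F j|) + |f b - F m| := by
    rw [show m + 2 = (m + 1) + 1 by ring, Finset.sum_range_succ, Finset.sum_range_succ']
    have e0 : u 1 = P.tag 0 := hutag 1 le_rfl (by omega)
    have e1 : u (m + 1) = P.tag m := by rw [hutag (m + 1) (by omega) le_rfl]; simp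
    have e2 : u (m + 1 + 1) = b := hulast (m + 2) (by omega)
    have hmid : ∑ k ∈ Finset.range m, |f (u (k + 1 + 1)) - f (u (k + 1))|
        = ∑ j ∈ Finset.range m, |F (j + 1) - F j| := by
      refine Finset.sum_congr rfl fun i hi => ?_
      simp only [Finset.mem_range] at hi
      rw [hutag (i + 1 + 1) (by omega) (by omega), hutag (i + 1) (by omega) (by omega)]
      simp only [hF, Nat.add_sub_cancel]
    rw [hmid, hu0, e0, e1, e2]
    simp only [hF]
    ring
  -- assemble
  have key : |F m| + |F 0| + ∑ j ∈ Finset.range m, |F (j + 1) - F j|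
      ≤ |f a| + |f b| + var f a b := by
    have b1 : |F 0| ≤ |f a| + |F 0 - f a| := by
      have := abs_sub_abs_le_abs_sub (F 0) (f a); linarith [abs_nonneg (F 0 - f a)]
    have b2 : |F m| ≤ |f b| + |f b - F m| := by
      have := abs_sub_abs_le_abs_sub (F m) (f b)
      rw [abs_sub_comm] at this; linarith
    rw [hdecomp] at hvar
    linarith
  calc |RS f g P| ≤ _ := step1
    _ ≤ (|f a| + |f b| + var f a b) * M := mul_le_mul_of_nonneg_right key hMnonneg
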